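/- arXiv:2504.06955 — 6 statements merged into one kernel-verified Lean document; each statement's English description precedes it below -/
import Mathlib

section
/- Let A be a real n×n matrix and let x̊, x : ℝ → EuclideanSpace ℝ (Fin n) be differentiable with derivatives A.mulVec (x̊ t) and A.mulVec (x t) at every t. Let α : ℝ → EuclideanSpace ℝ (Fin n) be differentiable with derivative -(Aᵀ).mulVec (α t) at every t. Suppose at time 0 we have ⟪α 0, x 0 - x̊ 0⟫ ≤ y₀ for a real number y₀. Then for every t ≥ 0, ⟪α t, x t - x̊ t⟫ ≤ y₀; that is, the trajectory x t remains in the moving halfspace {z : ⟪α t, z - x̊ t⟫ ≤ y₀}. -/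
open Matrix

lemma inner_mulVec_adj {n : ℕ} (A : Matrix (Fin n) (Fin n) ℝ)
    (u v : EuclideanSpace ℝ (Fin n)) :
    (inner ℝ (WithLp.toLp 2 (Aᵀ.mulVec u)) v : ℝ)
      = inner ℝ u (WithLp.toLp 2 (A.mulVec v)) := by
  simp only [EuclideanSpace.inner_eq_star_dotProduct, star_trivial]
  show v.ofLp ⬝ᵥ Aᵀ *ᵥ u.ofLp = A *ᵥ v.ofLp ⬝ᵥ u.ofLp
  rw [Matrix.dotProduct_mulVec, Matrix.vecMul_transpose]

theorem adjoint_halfspace_invariance {n : ℕ} (A : Matrix (Fin n) (Fin n) ℝ)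
    (xc x α : ℝ → EuclideanSpace ℝ (Fin n)) (y₀ : ℝ)
    (hxc : ∀ t, HasDerivAt xc (WithLp.toLp 2 (A.mulVec (xc t))) t)
    (hx : ∀ t, HasDerivAt x (WithLp.toLp 2 (A.mulVec (x t))) t)
    (hα : ∀ t, HasDerivAt α (-(WithLp.toLp 2 (Aᵀ.mulVec (α t)))) t)
    (h0 : (inner ℝ (α 0) (x 0 - xc 0) : ℝ) ≤ y₀) :
    ∀ t : ℝ, 0 ≤ t → (inner ℝ (α t) (x t - xc t) : ℝ) ≤ y₀ := by
  set f : ℝ → ℝ := fun t => (inner ℝ (α t) (x t - xc t) : ℝ) with hf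
  have hderiv : ∀ t, HasDerivAt f 0 t := by
    intro t
    have hd : HasDerivAt (fun t => x t - xc t)
        (WithLp.toLp 2 (A.mulVec (x t)) - WithLp.toLp 2 (A.mulVec (xc t))) t := (hx t).sub (hxc t)
    have H := (hα t).inner ℝ hd
    refine (H.congr_deriv ?_)
    have key : (inner ℝ (-(WithLp.toLp 2 (Aᵀ.mulVec (α t))))
        (x t - xc t) : ℝ)
        = - inner ℝ (α t) (
            WithLp.toLp 2 (A.mulVec (x t)) - WithLp.toLp 2 (A.mulVec (xc t))) := by
      rw [inner_neg_left]
      congr 1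
      have h2 := inner_mulVec_adj A (α t) (x t - xc t)
      have h3 : WithLp.toLp 2 (A.mulVec (x t - xc t).ofLp)
          = WithLp.toLp 2 (A.mulVec (x t)) - WithLp.toLp 2 (A.mulVec (xc t)) := by
        rw [WithLp.ofLp_sub, Matrix.mulVec_sub, WithLp.toLp_sub]
      rw [h2, h3]
    rw [key]; ring
  intro t _
  have hconst : f t = f 0 :=
    is_const_of_deriv_eq_zero (fun s => (hderiv s).differentiableAt)
      (fun s => (hderiv s).deriv) t 0
  calc f t = f 0 := hconst
    _ ≤ y₀ := h0
end

section
/- Let A be a real n×n matrix, and let α : ℝ → Matrix (Fin K) (Fin n) ℝ be differentiable with derivative -(α t) * A at every t (the matrix adjoint dynamics α' = -αA). Let x̊, x : ℝ → EuclideanSpace ℝ (Fin n) be differentiable with derivatives A.mulVec (x̊ t) and A.mulVec (x t). If (α 0).mulVec (x 0 - x̊ 0) ≤ y₀ componentwise for a fixed y₀ ∈ EuclideanSpace ℝ (Fin K), then for every t ≥ 0 one has (α t).mulVec (x t - x̊ t) ≤ y₀ componentwise; that is, x t lies in the moving H-representation polytope {z : (α t).mulVec (z - x̊ t) ≤ y₀}.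 -/
open Matrix

attribute [local instance] Matrix.normedAddCommGroup Matrix.normedSpace

theorem adjoint_polytope_invariance {n K : ℕ} (A : Matrix (Fin n) (Fin n) ℝ)
    (α : ℝ → Matrix (Fin K) (Fin n) ℝ)
    (hα : ∀ t, HasDerivAt α (-(α t) * A) t)
    (xc x : ℝ → EuclideanSpace ℝ (Fin n))
    (hxc : ∀ t, HasDerivAt xc (WithLp.toLp 2 (A.mulVec (xc t))) t)
    (hx : ∀ t, HasDerivAt x (WithLp.toLp 2 (A.mulVec (x t))) t)
    (y₀ : EuclideanSpace ℝ (Fin K))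
    (h0 : ∀ k, (α 0).mulVec (x 0 - xc 0) k ≤ y₀ k) :
    ∀ t : ℝ, 0 ≤ t → ∀ k, (α t).mulVec (x t - xc t) k ≤ y₀ k := by
  intro t _ k
  -- entrywise derivatives of α
  have hαe : ∀ t (j : Fin n), HasDerivAt (fun s => α s k j) ((-(α t) * A) k j) t := by
    intro t j
    have h1 := (hasDerivAt_pi.mp (hα t)) k
    exact (hasDerivAt_pi.mp h1) j
  -- coordinate derivatives of x and xc
  have hxe : ∀ t (j : Fin n), HasDerivAt (fun s => x s j) (A.mulVec (x t) j) t := by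
    intro t j
    exact (EuclideanSpace.proj j : EuclideanSpace ℝ (Fin n) →L[ℝ] ℝ).hasFDerivAt.comp_hasDerivAt t (hx t)
  have hxce : ∀ t (j : Fin n), HasDerivAt (fun s => xc s j) (A.mulVec (xc t) j) t := by
    intro t j
    exact (EuclideanSpace.proj j : EuclideanSpace ℝ (Fin n) →L[ℝ] ℝ).hasFDerivAt.comp_hasDerivAt t (hxc t)
  set g : ℝ → ℝ := fun s => ∑ j, α s k j * (x s j - xc s j) with hg
  have hgd : ∀ s, HasDerivAt g 0 s := by
    intro s
    have : HasDerivAt g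
        (∑ j, ((-(α s) * A) k j * (x s j - xc s j)
          + α s k j * (A.mulVec (x s) j - A.mulVec (xc s) j))) s := by
      apply HasDerivAt.fun_sum
      intro j _
      exact (hαe s j).mul ((hxe s j).sub (hxce s j))
    convert this using 1
    have key : ∀ v : Fin n → ℝ,
        ∑ j, (α s k j * A.mulVec v j) = ∑ j, ((α s * A) k j * v j) := by
      intro v
      simp only [Matrix.mulVec, Matrix.mul_apply, dotProduct, Finset.sum_mul,
        Finset.mul_sum]
      rw [Finset.sum_comm]
      congr 1; ext i; congr 1; ext j; ring
    have e1 : ∑ j, ((-(α s) * A) k j * (x s j - xc s j))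
        = -∑ j, ((α s * A) k j * (x s j - xc s j)) := by
      simp [Matrix.neg_mul, neg_mul, Finset.sum_neg_distrib]
    have e2 : ∑ j, (α s k j * (A.mulVec (x s) j - A.mulVec (xc s) j))
        = ∑ j, ((α s * A) k j * (x s j - xc s j)) := by
      simp only [mul_sub, Finset.sum_sub_distrib]
      rw [key (fun j => x s j), key (fun j => xc s j)]
    rw [Finset.sum_add_distrib, e1, e2, neg_add_cancel]
  have hconst : g t = g 0 := by
    apply is_const_of_deriv_eq_zero
    · exact fun s => (hgd s).differentiableAt
    · exact fun s => (hgd s).deriv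
  have hval : ∀ s, (α s).mulVec (x s - xc s) k = g s := by
    intro s
    simp [hg, Matrix.mulVec, dotProduct]
  rw [hval t, hconst, ← hval 0]
  exact h0 k
end

section
/- (Fixed dual vectors for a nonlinear system.) Let f : EuclideanSpace ℝ (Fin n) → EuclideanSpace ℝ (Fin n) be locally Lipschitz, let α ∈ Matrix (Fin K) (Fin n) ℝ be a fixed matrix, and let x̊ : [t₀,t_f] → ℝⁿ be differentiable with derivative f (x̊ t). Let y : [t₀,t_f] → ℝ^K be absolutely continuous (y t = y t₀ + ∫_{t₀}^t y' s ds with y' integrable) and suppose: (i) for every t and every k, the k-th facet of the polytope {x : α.mulVec (x - x̊ t) ≤ y t} (the subset where additionally ⟪α_k, x - x̊ t⟫ = (y t)_k, α_k being the k-th row of α) satisfies the facet-Lipschitz condition with respect to y; (ii) for a.e. t and every k, every x with α.mulVec (x - x̊ t) ≤ y t and ⟪α_k, x - x̊ t⟫ = (y t)_k satisfies ⟪α_k, f x - f (x̊ t)⟫ ≤ (y' t)_k. Then any differentiable x : [t₀,t_f] → ℝⁿ with derivative f (x t) and α.mulVec (x t₀ - x̊ t₀) ≤ y t₀ satisfies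 α.mulVec (x t - x̊ t) ≤ y t componentwise for all t ∈ [t₀,t_f]. -/
open Matrix MeasureTheory
set_option maxHeartbeats 2000000

/-- The sup norm of a vector in `EuclideanSpace ℝ (Fin K)`. -/
noncomputable def supNorm {K : ℕ} (v : EuclideanSpace ℝ (Fin K)) : ℝ :=
  ‖(WithLp.equiv 2 (Fin K → ℝ)) v‖

/-- Membership in the `k`-th facet of the H-rep polytope `{x : α (x - xc) ≤ y}`. -/
def inPolyFacet {n K : ℕ} (α : Matrix (Fin K) (Fin n) ℝ)
    (xc : EuclideanSpace ℝ (Fin n)) (y : EuclideanSpace ℝ (Fin K)) (k : Fin K)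
    (x : EuclideanSpace ℝ (Fin n)) : Prop :=
  (∀ j, α.mulVec (x - xc) j ≤ y j) ∧ α.mulVec (x - xc) k = y k

/-- The `k`-th facet of the polytope `{x : α (x - xc) ≤ y}` is locally Lipschitz in `y`. -/
def PolyFacetLipschitz {n K : ℕ} (α : Matrix (Fin K) (Fin n) ℝ)
    (xc : EuclideanSpace ℝ (Fin n)) (y : EuclideanSpace ℝ (Fin K)) (k : Fin K) : Prop :=
  ∀ x, inPolyFacet α xc y k x →
    ∃ δ > (0:ℝ), ∃ ε > (0:ℝ), ∃ L > (0:ℝ),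
      ∀ y₁ y₂ : EuclideanSpace ℝ (Fin K),
        supNorm (y₁ - y) < ε → supNorm (y₂ - y) < ε →
        ∀ x₁, ‖x₁ - x‖ < δ → inPolyFacet α xc y₁ k x₁ →
          ∃ x₂, ‖x₂ - x‖ ≤ 2 * δ ∧ inPolyFacet α xc y₂ k x₂ ∧
            ‖x₁ - x₂‖ ≤ L * supNorm (y₁ - y₂)

section Aux

lemma fda_dot_eq_inner {n : ℕ} (a : Fin n → ℝ) (v : EuclideanSpace ℝ (Fin n)) :
    a ⬝ᵥ v = inner ℝ ((WithLp.equiv 2 (Fin n → ℝ)).symm a) v := by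
  simp [dotProduct, PiLp.inner_apply, RCLike.inner_apply, mul_comm]

lemma fda_abs_dot_le {n : ℕ} (a : Fin n → ℝ) (v : EuclideanSpace ℝ (Fin n)) :
    |a ⬝ᵥ v| ≤ ‖(WithLp.equiv 2 (Fin n → ℝ)).symm a‖ * ‖v‖ := by
  rw [fda_dot_eq_inner]
  exact abs_real_inner_le_norm _ _

lemma fda_hasDerivAt_dot {n : ℕ} (a : Fin n → ℝ) {u : ℝ → EuclideanSpace ℝ (Fin n)}
    {u' : EuclideanSpace ℝ (Fin n)} {t : ℝ} (h : HasDerivAt u u' t) :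
    HasDerivAt (fun s => a ⬝ᵥ u s) (a ⬝ᵥ u') t := by
  have h2 := (innerSL ℝ ((WithLp.equiv 2 (Fin n → ℝ)).symm a)).hasFDerivAt.comp_hasDerivAt t h
  have e : ∀ v : EuclideanSpace ℝ (Fin n),
      (innerSL ℝ ((WithLp.equiv 2 (Fin n → ℝ)).symm a)) v = a ⬝ᵥ v := by
    intro v; rw [fda_dot_eq_inner]; rfl
  simpa [fda_dot_eq_inner, Function.comp_def] using h2

lemma fda_continuousOn_dot {n : ℕ} (a : Fin n → ℝ) {u : ℝ → EuclideanSpace ℝ (Fin n)}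
    {s : Set ℝ} (hu : ContinuousOn u s) : ContinuousOn (fun t => a ⬝ᵥ u t) s := by
  have h2 := (innerSL ℝ ((WithLp.equiv 2 (Fin n → ℝ)).symm a)).continuous.comp_continuousOn hu
  exact h2.congr fun t _ => by rw [Function.comp_apply, fda_dot_eq_inner]; rfl

lemma fda_dot_split {n : ℕ} (a : Fin n → ℝ) (u v w : EuclideanSpace ℝ (Fin n)) :
    a ⬝ᵥ (u - w) = a ⬝ᵥ (u - v) + a ⬝ᵥ (v - w) := by
  simp only [dotProduct, PiLp.sub_apply, Pi.sub_apply]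
  rw [← Finset.sum_add_distrib]
  congr 1; ext i; ring

lemma fda_coord_le_supNorm {K : ℕ} (v : EuclideanSpace ℝ (Fin K)) (k : Fin K) :
    |v k| ≤ supNorm v := by
  simpa [supNorm] using norm_le_pi_norm ((WithLp.equiv 2 (Fin K → ℝ)) v) k

lemma fda_supNorm_nonneg {K : ℕ} (v : EuclideanSpace ℝ (Fin K)) : 0 ≤ supNorm v :=
  norm_nonneg _

lemma fda_supNorm_le {K : ℕ} (v : EuclideanSpace ℝ (Fin K)) {r : ℝ} (hr : 0 ≤ r)
    (h : ∀ k, |v k| ≤ r) : supNorm v ≤ r := by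
  rw [supNorm, pi_norm_le_iff_of_nonneg hr]; simpa using h

lemma fda_exists_norm_eq {K : ℕ} [Nonempty (Fin K)] (v : Fin K → ℝ) (hv : ∀ j, 0 ≤ v j) :
    ∃ j, ‖v‖ = v j := by
  obtain ⟨j, -, hj⟩ := Finset.exists_mem_eq_sup Finset.univ Finset.univ_nonempty
    (fun i => ‖v i‖₊)
  refine ⟨j, ?_⟩
  rw [Pi.norm_def, hj]
  simp [Real.norm_eq_abs, abs_of_nonneg (hv j)]

lemma fda_max_sub (a b : ℝ) : max a b - b = max (a - b) 0 := by
  rcases le_total a b with h | h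
  · rw [max_eq_right h, max_eq_right (by linarith), sub_self]
  · rw [max_eq_left h, max_eq_left (by linarith)]

end Aux

/-- **Fixed dual vectors for a nonlinear system.** -/
theorem fixed_dual_vectors {n K : ℕ}
    (f : EuclideanSpace ℝ (Fin n) → EuclideanSpace ℝ (Fin n))
    (hf : LocallyLipschitz f)
    (α : Matrix (Fin K) (Fin n) ℝ)
    (t₀ tf : ℝ) (ht : t₀ ≤ tf)
    (xc : ℝ → EuclideanSpace ℝ (Fin n))
    (hxc : ∀ t ∈ Set.Icc t₀ tf, HasDerivAt xc (f (xc t)) t)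
    (y : ℝ → EuclideanSpace ℝ (Fin K)) (y' : ℝ → EuclideanSpace ℝ (Fin K))
    (hy'int : IntegrableOn y' (Set.Icc t₀ tf))
    (hy : ∀ t ∈ Set.Icc t₀ tf, y t = y t₀ + ∫ s in t₀..t, y' s)
    -- (i) locally Lipschitz facets
    (hfacet : ∀ t ∈ Set.Icc t₀ tf, ∀ k : Fin K, PolyFacetLipschitz α (xc t) (y t) k)
    -- (ii) offset dynamics dominate the flow along each facet
    (hξ : ∀ᵐ t ∂(volume.restrict (Set.Icc t₀ tf)), ∀ k : Fin K,
      ∀ x : EuclideanSpace ℝ (Fin n), inPolyFacet α (xc t) (y t) k x →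
        α k ⬝ᵥ (f x - f (xc t)) ≤ y' t k)
    (x : ℝ → EuclideanSpace ℝ (Fin n))
    (hx : ∀ t ∈ Set.Icc t₀ tf, HasDerivAt x (f (x t)) t)
    (hx₀ : ∀ k, α.mulVec (x t₀ - xc t₀) k ≤ y t₀ k) :
    ∀ t ∈ Set.Icc t₀ tf, ∀ k, α.mulVec (x t - xc t) k ≤ y t k := by
  rcases Nat.eq_zero_or_pos K with hK0 | hKpos
  · subst hK0; intro t _ k; exact k.elim0
  have hKne : Nonempty (Fin K) := ⟨⟨0, hKpos⟩⟩
  have hfc : Continuous f := hf.continuous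
  have hxcont : ContinuousOn x (Set.Icc t₀ tf) :=
    fun s hs => (hx s hs).continuousAt.continuousWithinAt
  have hxccont : ContinuousOn xc (Set.Icc t₀ tf) :=
    fun s hs => (hxc s hs).continuousAt.continuousWithinAt
  have hycont : ContinuousOn y (Set.Icc t₀ tf) := by
    have h1 : ContinuousOn (fun t => y t₀ + ∫ s in Set.Ioc t₀ t, y' s) (Set.Icc t₀ tf) :=
      continuousOn_const.add (intervalIntegral.continuousOn_primitive hy'int)
    exact h1.congr fun t htt => by rw [hy t htt, intervalIntegral.integral_of_le htt.1]
  set ζ : Fin K → ℝ → ℝ := fun j s => α j ⬝ᵥ (x s - xc s) - y s j with hζdef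
  have hyjcont : ∀ j, ContinuousOn (fun s => y s j) (Set.Icc t₀ tf) := by
    intro j
    have := (EuclideanSpace.proj (𝕜 := ℝ) j).continuous.comp_continuousOn hycont
    exact this.congr fun s _ => by simp
  have hζcont : ∀ j, ContinuousOn (ζ j) (Set.Icc t₀ tf) := fun j =>
    (fda_continuousOn_dot (α j) (hxcont.sub hxccont)).sub (hyjcont j)
  have hgcont : ∀ j, ContinuousOn (fun s => α j ⬝ᵥ (f (x s) - f (xc s))) (Set.Icc t₀ tf) :=
    fun j => fda_continuousOn_dot (α j)
      ((hfc.comp_continuousOn hxcont).sub (hfc.comp_continuousOn hxccont))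
  have hy'j : ∀ j, IntegrableOn (fun s => y' s j) (Set.Icc t₀ tf) := by
    intro j
    simpa [IntegrableOn] using (EuclideanSpace.proj (𝕜 := ℝ) j).integrable_comp hy'int
  have hgint : ∀ (j : Fin K) (σ t : ℝ), t₀ ≤ σ → σ ≤ t → t ≤ tf →
      IntervalIntegrable (fun u => α j ⬝ᵥ (f (x u) - f (xc u)) - y' u j) volume σ t := by
    intro j σ t h1 h2 h3
    have hsub : Set.uIcc σ t ⊆ Set.Icc t₀ tf := by
      rw [Set.uIcc_of_le h2]; exact Set.Icc_subset_Icc h1 h3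
    exact (((hgcont j).mono hsub).intervalIntegrable).sub
      ((intervalIntegrable_iff_integrableOn_Icc_of_le h2).2
        ((hy'j j).mono_set (Set.Icc_subset_Icc h1 h3)))
  have hζFTC : ∀ (j : Fin K) (σ t : ℝ), t₀ ≤ σ → σ ≤ t → t ≤ tf →
      ζ j t - ζ j σ = ∫ s in σ..t, (α j ⬝ᵥ (f (x s) - f (xc s)) - y' s j) := by
    intro j σ t h1 h2 h3
    have hsub : Set.uIcc σ t ⊆ Set.Icc t₀ tf := by
      rw [Set.uIcc_of_le h2]; exact Set.Icc_subset_Icc h1 h3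
    have hmem_t : t ∈ Set.Icc t₀ tf := ⟨h1.trans h2, h3⟩
    have hmem_σ : σ ∈ Set.Icc t₀ tf := ⟨h1, h2.trans h3⟩
    have e1 : ∫ s in σ..t, α j ⬝ᵥ (f (x s) - f (xc s))
        = α j ⬝ᵥ (x t - xc t) - α j ⬝ᵥ (x σ - xc σ) := by
      apply intervalIntegral.integral_eq_sub_of_hasDerivAt
      · exact fun s hs => fda_hasDerivAt_dot (α j) ((hx s (hsub hs)).sub (hxc s (hsub hs)))
      · exact ((hgcont j).mono hsub).intervalIntegrable
    have hyint' : IntervalIntegrable y' volume σ t :=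
      (intervalIntegrable_iff_integrableOn_Icc_of_le h2).2
        (hy'int.mono_set (Set.Icc_subset_Icc h1 h3))
    have hyint1 : IntervalIntegrable y' volume t₀ σ :=
      (intervalIntegrable_iff_integrableOn_Icc_of_le h1).2
        (hy'int.mono_set (Set.Icc_subset_Icc le_rfl (h2.trans h3)))
    have hyint2 : IntervalIntegrable y' volume t₀ t :=
      (intervalIntegrable_iff_integrableOn_Icc_of_le (h1.trans h2)).2
        (hy'int.mono_set (Set.Icc_subset_Icc le_rfl h3))
    have e2 : y t - y σ = ∫ s in σ..t, y' s := by
      rw [hy t hmem_t, hy σ hmem_σ, add_sub_add_left_eq_sub]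
      exact intervalIntegral.integral_interval_sub_left hyint2 hyint1
    have e2j : y t j - y σ j = ∫ s in σ..t, y' s j := by
      have h4 := (EuclideanSpace.proj (𝕜 := ℝ) j).intervalIntegral_comp_comm hyint'
      have h5 := congrArg (fun v : EuclideanSpace ℝ (Fin K) => v j) e2
      simp only [PiLp.sub_apply] at h5
      rw [h5]
      simpa using h4.symm
    have hint2 : IntervalIntegrable (fun s => y' s j) volume σ t :=
      (intervalIntegrable_iff_integrableOn_Icc_of_le h2).2
        ((hy'j j).mono_set (Set.Icc_subset_Icc h1 h3))
    rw [intervalIntegral.integral_sub ((hgcont j).mono hsub).intervalIntegrable hint2,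
      e1, ← e2j]
    simp only [hζdef]
    ring
  -- exit time
  set S : Set ℝ := {t | t ∈ Set.Icc t₀ tf ∧ ∀ s ∈ Set.Icc t₀ t, ∀ k, ζ k s ≤ 0} with hSdef
  have ht₀S : t₀ ∈ S := by
    refine ⟨⟨le_rfl, ht⟩, fun s hs k => ?_⟩
    have hs0 : s = t₀ := le_antisymm hs.2 hs.1
    subst hs0
    exact sub_nonpos.2 (hx₀ k)
  have hSbdd : BddAbove S := ⟨tf, fun u hu => hu.1.2⟩
  have hSne : S.Nonempty := ⟨t₀, ht₀S⟩
  set τ := sSup S with hτdef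
  have hτ₀ : t₀ ≤ τ := le_csSup hSbdd ht₀S
  have hτtf : τ ≤ tf := csSup_le hSne fun u hu => hu.1.2
  have hτmem : τ ∈ Set.Icc t₀ tf := ⟨hτ₀, hτtf⟩
  have hbefore : ∀ s ∈ Set.Icc t₀ τ, s < τ → ∀ k, ζ k s ≤ 0 := by
    intro s hs hlt k
    obtain ⟨u, huS, hu⟩ := exists_lt_of_lt_csSup hSne hlt
    exact huS.2 s ⟨hs.1, hu.le⟩ k
  have hτpoly : ∀ s ∈ Set.Icc t₀ τ, ∀ k, ζ k s ≤ 0 := by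
    intro s hs k
    rcases lt_or_eq_of_le hs.2 with hlt | heq
    · exact hbefore s hs hlt k
    · subst heq
      rcases eq_or_lt_of_le hτ₀ with heq0 | hlt0
      · exact ht₀S.2 τ ⟨hτ₀, heq0.ge⟩ k
      · have hne2 : (nhdsWithin τ (Set.Ico t₀ τ)).NeBot := by
          rw [← mem_closure_iff_nhdsWithin_neBot, closure_Ico (ne_of_lt hlt0)]
          exact ⟨hτ₀, le_rfl⟩
        have htend : Filter.Tendsto (ζ k) (nhdsWithin τ (Set.Ico t₀ τ)) (nhds (ζ k τ)) :=
          (hζcont k τ hτmem).mono_left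
            (nhdsWithin_mono τ (fun u hu => ⟨hu.1, hu.2.le.trans hτtf⟩))
        refine le_of_tendsto htend ?_
        filter_upwards [self_mem_nhdsWithin] with u hu
        exact hbefore u ⟨hu.1, hu.2.le⟩ hu.2 k
  -- main claim
  have hmain : τ = tf := by
    by_contra hnetf
    have hτlt : τ < tf := lt_of_le_of_ne hτtf hnetf
    -- Lipschitz data for f near x τ
    obtain ⟨Kf, U, hU, hLip⟩ := hf (x τ)
    obtain ⟨r, hr, hball⟩ := Metric.mem_nhds_iff.1 hU
    -- facet data
    have key : ∀ k : Fin K, ∃ δ > (0:ℝ), ∃ ε > (0:ℝ), ∃ L > (0:ℝ),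
        ζ k τ = 0 → ∀ y₁ y₂ : EuclideanSpace ℝ (Fin K),
          supNorm (y₁ - y τ) < ε → supNorm (y₂ - y τ) < ε →
          ∀ x₁, ‖x₁ - x τ‖ < δ → inPolyFacet α (xc τ) y₁ k x₁ →
            ∃ x₂, inPolyFacet α (xc τ) y₂ k x₂ ∧ ‖x₁ - x₂‖ ≤ L * supNorm (y₁ - y₂) := by
      intro k
      by_cases hk : ζ k τ = 0
      · have hxτfacet : inPolyFacet α (xc τ) (y τ) k (x τ) := by
          constructor
          · intro i; exact sub_nonpos.1 (hτpoly τ ⟨hτ₀, le_rfl⟩ i)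
          · exact sub_eq_zero.1 hk
        obtain ⟨δ, hδ, ε, hε, L, hL, hprop⟩ := hfacet τ hτmem k (x τ) hxτfacet
        refine ⟨δ, hδ, ε, hε, L, hL, fun _ y₁ y₂ h1 h2 x₁ h3 h4 => ?_⟩
        obtain ⟨x₂, _, h6, h7⟩ := hprop y₁ y₂ h1 h2 x₁ h3 h4
        exact ⟨x₂, h6, h7⟩
      · exact ⟨1, one_pos, 1, one_pos, 1, one_pos, fun h => absurd h hk⟩
    choose δf hδf εf hεf Lf hLf hkey using key
    set δ₀ : ℝ := Finset.univ.inf' Finset.univ_nonempty δf with hδ₀def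
    set ε₀ : ℝ := Finset.univ.inf' Finset.univ_nonempty εf with hε₀def
    set L₀ : ℝ := Finset.univ.sup' Finset.univ_nonempty Lf with hL₀def
    have hδ₀ : 0 < δ₀ := by
      rw [hδ₀def, Finset.lt_inf'_iff]; exact fun k _ => hδf k
    have hε₀ : 0 < ε₀ := by
      rw [hε₀def, Finset.lt_inf'_iff]; exact fun k _ => hεf k
    have hL₀le : ∀ k, Lf k ≤ L₀ := fun k => Finset.le_sup' _ (Finset.mem_univ k)
    have hL₀ : 0 < L₀ := lt_of_lt_of_le (hLf ⟨0, hKpos⟩) (hL₀le _)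
    have hδ₀le : ∀ k, δ₀ ≤ δf k := fun k => Finset.inf'_le _ (Finset.mem_univ k)
    have hε₀le : ∀ k, ε₀ ≤ εf k := fun k => Finset.inf'_le _ (Finset.mem_univ k)
    -- constants
    set Cα : ℝ := Finset.univ.sup' Finset.univ_nonempty
      (fun j : Fin K => ‖((WithLp.equiv 2 (Fin n → ℝ)).symm (α j) : EuclideanSpace ℝ (Fin n))‖)
      with hCαdef
    have hCαle : ∀ j : Fin K,
        ‖((WithLp.equiv 2 (Fin n → ℝ)).symm (α j) : EuclideanSpace ℝ (Fin n))‖ ≤ Cα :=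
      fun j => by
        rw [hCαdef]
        exact Finset.le_sup'
          (fun j : Fin K =>
            ‖((WithLp.equiv 2 (Fin n → ℝ)).symm (α j) : EuclideanSpace ℝ (Fin n))‖)
          (Finset.mem_univ j)
    have hCα : 0 ≤ Cα := le_trans (norm_nonneg _) (hCαle ⟨0, hKpos⟩)
    set C : ℝ := Cα * (Kf : ℝ) * L₀ + 1 with hCdef
    have hCmain : 0 ≤ Cα * (Kf : ℝ) * L₀ := mul_nonneg (mul_nonneg hCα Kf.coe_nonneg) hL₀.le
    have hC0 : 0 < C := by rw [hCdef]; linarith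
    -- sup of positive parts
    set Z : ℝ → Fin K → ℝ := fun s j => max (ζ j s) 0 with hZdef
    set ψ : ℝ → ℝ := fun s => ‖Z s‖ with hψdef
    have hψ0 : ∀ s, 0 ≤ ψ s := fun s => norm_nonneg _
    have hZψ : ∀ s j, Z s j ≤ ψ s := fun s j =>
      le_trans (le_abs_self _) (by simpa [Real.norm_eq_abs] using norm_le_pi_norm (Z s) j)
    have hζψ : ∀ s j, ζ j s ≤ ψ s := fun s j => le_trans (le_max_left _ _) (hZψ s j)
    have hψcont : ContinuousOn ψ (Set.Icc t₀ tf) :=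
      ContinuousOn.norm (continuousOn_pi.2 fun j => (hζcont j).sup continuousOn_const)
    have hψτ : ψ τ = 0 := by
      rw [hψdef]
      simp only [norm_eq_zero]
      funext j
      exact max_eq_right (hτpoly τ ⟨hτ₀, le_rfl⟩ j)
    -- pi-level recentred offset difference
    set W : ℝ → Fin K → ℝ := fun s j => y s j + α j ⬝ᵥ (xc s - xc τ) - y τ j with hWdef
    have hWcont : ContinuousOn (fun s => ‖W s‖) (Set.Icc t₀ tf) :=
      ContinuousOn.norm (continuousOn_pi.2 fun j =>
        ((hyjcont j).add (fda_continuousOn_dot (α j) (hxccont.sub continuousOn_const))).sub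
          continuousOn_const)
    have hWτ : ‖W τ‖ = 0 := by
      rw [norm_eq_zero]
      funext j
      simp [hWdef, dotProduct, PiLp.sub_apply, sub_self]
    -- eventual smallness conditions near τ
    have hev : ∀ᶠ s in nhdsWithin τ (Set.Icc t₀ tf),
        ((∀ k, ζ k τ < 0 → ζ k s < 0) ∧ ‖x s - x τ‖ < min δ₀ (r/2)) ∧
        ((‖W s‖ + ψ s < ε₀) ∧ (L₀ * ψ s < r/2)) := by
      refine Filter.Eventually.and (Filter.Eventually.and ?_ ?_) (Filter.Eventually.and ?_ ?_)
      · rw [Filter.eventually_all]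
        intro k
        by_cases hk : ζ k τ < 0
        · have := (hζcont k τ hτmem).eventually_lt_const hk
          filter_upwards [this] with u hu _
          exact hu
        · filter_upwards with u hu; exact absurd hu hk
      · have htd : Filter.Tendsto (fun s => ‖x s - x τ‖) (nhdsWithin τ (Set.Icc t₀ tf))
            (nhds ‖x τ - x τ‖) := ((hxcont τ hτmem).sub continuousWithinAt_const).norm
        rw [sub_self, norm_zero] at htd
        exact htd.eventually_lt_const (by positivity)
      · have htd : Filter.Tendsto (fun s => ‖W s‖ + ψ s) (nhdsWithin τ (Set.Icc t₀ tf))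
            (nhds (‖W τ‖ + ψ τ)) := ((hWcont τ hτmem).add (hψcont τ hτmem))
        rw [hWτ, hψτ, add_zero] at htd
        exact htd.eventually_lt_const hε₀
      · have htd : Filter.Tendsto (fun s => L₀ * ψ s) (nhdsWithin τ (Set.Icc t₀ tf))
            (nhds (L₀ * ψ τ)) := (continuousWithinAt_const.mul (hψcont τ hτmem))
        rw [hψτ, mul_zero] at htd
        exact htd.eventually_lt_const (by positivity)
    obtain ⟨ρ, hρ, hρsub⟩ := Metric.mem_nhdsWithin_iff.1 hev
    set h : ℝ := min (min (ρ/2) (tf - τ)) (1/(2*C)) with hhdef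
    have hh0 : 0 < h := by
      rw [hhdef]
      refine lt_min (lt_min (by linarith) (by linarith)) (by positivity)
    have hhtf : τ + h ≤ tf := by
      have : h ≤ tf - τ := le_trans (min_le_left _ _) (min_le_right _ _)
      linarith
    have hIsub : Set.Icc τ (τ+h) ⊆ Set.Icc t₀ tf := Set.Icc_subset_Icc hτ₀ hhtf
    have hIP : ∀ s ∈ Set.Icc τ (τ+h),
        ((∀ k, ζ k τ < 0 → ζ k s < 0) ∧ ‖x s - x τ‖ < min δ₀ (r/2)) ∧
        ((‖W s‖ + ψ s < ε₀) ∧ (L₀ * ψ s < r/2)) := by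
      intro s hs
      apply hρsub
      refine ⟨?_, hIsub hs⟩
      rw [Metric.mem_ball, Real.dist_eq, abs_of_nonneg (by linarith [hs.1])]
      have : h ≤ ρ/2 := le_trans (min_le_left _ _) (min_le_left _ _)
      linarith [hs.2]
    have hCh : C * h ≤ 1/2 := by
      have h1 : h ≤ 1/(2*C) := min_le_right _ _
      have := mul_le_mul_of_nonneg_left h1 hC0.le
      calc C * h ≤ C * (1/(2*C)) := this
        _ = 1/2 := by field_simp
    -- the a.e. differential inequality on the small interval
    have hae : ∀ᵐ s ∂(volume.restrict (Set.Icc t₀ tf)),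
        ∀ j : Fin K, s ∈ Set.Icc τ (τ+h) → 0 ≤ ζ j s →
          α j ⬝ᵥ (f (x s) - f (xc s)) - y' s j ≤ C * ψ s := by
      filter_upwards [hξ] with s hξs
      intro j hsI hζjs
      obtain ⟨⟨hP1, hP2⟩, hP3, hP4⟩ := hIP s hsI
      have hjA : ζ j τ = 0 := by
        rcases lt_or_eq_of_le (hτpoly τ ⟨hτ₀, le_rfl⟩ j) with hlt | heq
        · exact absurd (hP1 j hlt) (not_lt.2 hζjs)
        · exact heq
      -- recentred offsets at time s
      set w : EuclideanSpace ℝ (Fin K) :=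
        (WithLp.equiv 2 (Fin K → ℝ)).symm (fun i => y s i + α i ⬝ᵥ (xc s - xc τ)) with hwdef
      set Y₁ : EuclideanSpace ℝ (Fin K) :=
        (WithLp.equiv 2 (Fin K → ℝ)).symm
          (fun i => max (α i ⬝ᵥ (x s - xc τ)) (y s i + α i ⬝ᵥ (xc s - xc τ))) with hY₁def
      have hwi : ∀ i, w i = y s i + α i ⬝ᵥ (xc s - xc τ) := fun i => rfl
      have hY₁i : ∀ i, Y₁ i = max (α i ⬝ᵥ (x s - xc τ)) (w i) := fun i => rfl
      have hvw : ∀ i, α i ⬝ᵥ (x s - xc τ) - w i = ζ i s := by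
        intro i
        rw [hwi, fda_dot_split (α i) (x s) (xc s) (xc τ)]
        simp only [hζdef]
        ring
      have hWsi : ∀ i, w i - y τ i = W s i := fun i => rfl
      -- x s lies on facet j of the Y₁-polytope centred at xc τ
      have hfacet1 : inPolyFacet α (xc τ) Y₁ j (x s) := by
        constructor
        · intro i
          show α i ⬝ᵥ (x s - xc τ) ≤ Y₁ i
          rw [hY₁i]
          exact le_max_left _ _
        · show α j ⬝ᵥ (x s - xc τ) = Y₁ j
          rw [hY₁i]
          refine (max_eq_left ?_).symm
          have := hvw j
          linarith
      -- sup-norm bounds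
      have hsupY₁w : supNorm (Y₁ - w) ≤ ψ s := by
        refine fda_supNorm_le _ (hψ0 s) fun i => ?_
        have e1 : (Y₁ - w) i = Y₁ i - w i := rfl
        rw [e1, hY₁i, fda_max_sub, hvw]
        rw [abs_of_nonneg (le_max_right _ _)]
        exact hZψ s i
      have hsupwyτ : supNorm (w - y τ) ≤ ‖W s‖ := by
        refine fda_supNorm_le _ (norm_nonneg _) fun i => ?_
        have e1 : (w - y τ) i = w i - y τ i := rfl
        rw [e1, hWsi]
        simpa [Real.norm_eq_abs] using norm_le_pi_norm (W s) i
      have hsupY₁yτ : supNorm (Y₁ - y τ) < ε₀ := by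
        refine lt_of_le_of_lt (fda_supNorm_le _ (by positivity) fun i => ?_) hP3
        have e1 : (Y₁ - y τ) i = Y₁ i - y τ i := rfl
        rw [e1]
        have e2 : Y₁ i - y τ i = (Y₁ i - w i) + (w i - y τ i) := by ring
        rw [e2]
        refine le_trans (abs_add_le _ _) ?_
        have b1 : |Y₁ i - w i| ≤ ψ s := by
          rw [hY₁i, fda_max_sub, hvw, abs_of_nonneg (le_max_right _ _)]
          exact hZψ s i
        have b2 : |w i - y τ i| ≤ ‖W s‖ := by
          rw [hWsi]
          simpa [Real.norm_eq_abs] using norm_le_pi_norm (W s) i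
        linarith
      have hsupwyτ' : supNorm (w - y τ) < ε₀ :=
        lt_of_le_of_lt hsupwyτ (by linarith [hψ0 s])
      -- apply the facet-Lipschitz property at x τ
      obtain ⟨x₂, hx₂facet, hx₂close⟩ := hkey j hjA Y₁ w
        (lt_of_lt_of_le hsupY₁yτ (hε₀le j))
        (lt_of_lt_of_le hsupwyτ' (hε₀le j))
        (x s)
        (lt_of_lt_of_le hP2 (le_trans (min_le_left _ _) (hδ₀le j)))
        hfacet1
      have hx₂close' : ‖x s - x₂‖ ≤ L₀ * ψ s := by
        refine le_trans hx₂close ?_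
        have := mul_le_mul (hL₀le j) hsupY₁w (fda_supNorm_nonneg _) hL₀.le
        linarith
      -- x₂ lies on facet j of the actual polytope at time s
      have hsmem : s ∈ Set.Icc t₀ tf := hIsub hsI
      have hfacet2 : inPolyFacet α (xc s) (y s) j x₂ := by
        obtain ⟨hall, heq⟩ := hx₂facet
        have hdot : ∀ i, α i ⬝ᵥ (x₂ - xc τ) = α i ⬝ᵥ (x₂ - xc s) + α i ⬝ᵥ (xc s - xc τ) :=
          fun i => fda_dot_split (α i) x₂ (xc s) (xc τ)
        constructor
        · intro i
          have h1 : α i ⬝ᵥ (x₂ - xc τ) ≤ w i := hall i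
          show α i ⬝ᵥ (x₂ - xc s) ≤ y s i
          rw [hdot i, hwi] at h1
          linarith
        · have h1 : α j ⬝ᵥ (x₂ - xc τ) = w j := heq
          show α j ⬝ᵥ (x₂ - xc s) = y s j
          rw [hdot j, hwi] at h1
          linarith
      -- flow bound from hypothesis (ii)
      have hbound := hξs j x₂ hfacet2
      -- Lipschitz estimate for f
      have hxsU : x s ∈ U := by
        apply hball
        rw [Metric.mem_ball, dist_eq_norm]
        have : ‖x s - x τ‖ < r/2 := lt_of_lt_of_le hP2 (min_le_right _ _)
        linarith
      have hx₂U : x₂ ∈ U := by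
        apply hball
        rw [Metric.mem_ball, dist_eq_norm]
        have e1 : ‖x₂ - x τ‖ ≤ ‖x₂ - x s‖ + ‖x s - x τ‖ := norm_sub_le_norm_sub_add_norm_sub _ _ _
        have e2 : ‖x₂ - x s‖ = ‖x s - x₂‖ := norm_sub_rev _ _
        have e3 : ‖x s - x τ‖ < r/2 := lt_of_lt_of_le hP2 (min_le_right _ _)
        have e4 : ‖x s - x₂‖ ≤ L₀ * ψ s := hx₂close'
        linarith
      have hfdiff : ‖f (x s) - f x₂‖ ≤ (Kf : ℝ) * ‖x s - x₂‖ := by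
        have := hLip.dist_le_mul (x := x s) (y := x₂) hxsU hx₂U
        rwa [dist_eq_norm, dist_eq_norm] at this
      -- final computation
      have hsplit : α j ⬝ᵥ (f (x s) - f (xc s))
          = α j ⬝ᵥ (f (x s) - f x₂) + α j ⬝ᵥ (f x₂ - f (xc s)) :=
        fda_dot_split (α j) (f (x s)) (f x₂) (f (xc s))
      have habs : α j ⬝ᵥ (f (x s) - f x₂) ≤ Cα * ((Kf : ℝ) * (L₀ * ψ s)) := by
        refine le_trans (le_abs_self _) (le_trans (fda_abs_dot_le _ _) ?_)
        have b1 : ‖f (x s) - f x₂‖ ≤ (Kf : ℝ) * (L₀ * ψ s) := by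
          refine le_trans hfdiff ?_
          exact mul_le_mul_of_nonneg_left hx₂close' Kf.coe_nonneg
        refine mul_le_mul (hCαle j) b1 (norm_nonneg _) hCα
      have hfinal : α j ⬝ᵥ (f (x s) - f (xc s)) ≤ y' s j + Cα * ((Kf : ℝ) * (L₀ * ψ s)) := by
        rw [hsplit]
        linarith
      have hCψ : Cα * ((Kf : ℝ) * (L₀ * ψ s)) ≤ C * ψ s := by
        rw [hCdef]
        have := hψ0 s
        nlinarith
      linarith
    -- maximum of ψ on the interval
    obtain ⟨smax, hsmaxI, hsmaxM⟩ := isCompact_Icc.exists_isMaxOn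
      (Set.nonempty_Icc.2 (by linarith : τ ≤ τ + h)) (hψcont.mono hIsub)
    set M : ℝ := ψ smax with hMdef
    have hM0 : 0 ≤ M := hψ0 _
    have hMle : ∀ u ∈ Set.Icc τ (τ+h), ψ u ≤ M := fun u hu => hsmaxM hu
    -- the bootstrap inequality
    have hkey2 : ∀ t ∈ Set.Icc τ (τ+h), ψ t ≤ C * ((t - τ) * M) := by
      intro t htI
      have htt₀ : t ∈ Set.Icc t₀ tf := hIsub htI
      rcases eq_or_lt_of_le (hψ0 t) with h0 | h0
      · exact h0 ▸ mul_nonneg hC0.le (mul_nonneg (by linarith [htI.1]) hM0)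
      · obtain ⟨j, hj⟩ := fda_exists_norm_eq (Z t) (fun i => le_max_right _ _)
        have hζjt : ζ j t = ψ t := by
          have h0' : (0:ℝ) < ‖Z t‖ := h0
          rw [hj] at h0'
          rcases le_or_gt (ζ j t) 0 with hle | hlt
          · exfalso
            have hz : Z t j = 0 := max_eq_right hle
            rw [hz] at h0'
            exact lt_irrefl 0 h0'
          · have hz : Z t j = ζ j t := max_eq_left hlt.le
            have he : ψ t = Z t j := hj
            rw [hz] at he
            exact he.symm
        -- last zero of ζ j before t
        set T : Set ℝ := Set.Icc τ t ∩ ζ j ⁻¹' Set.Iic 0 with hTdef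
        have hζcont' : ContinuousOn (ζ j) (Set.Icc τ t) :=
          (hζcont j).mono (Set.Icc_subset_Icc hτ₀ htt₀.2)
        have hTclosed : IsClosed T :=
          hζcont'.preimage_isClosed_of_isClosed isClosed_Icc isClosed_Iic
        have hTne : T.Nonempty := ⟨τ, ⟨le_rfl, htI.1⟩, hτpoly τ ⟨hτ₀, le_rfl⟩ j⟩
        have hTbdd : BddAbove T := ⟨t, fun u hu => hu.1.2⟩
        set σ : ℝ := sSup T with hσdef
        have hσT : σ ∈ T := hTclosed.csSup_mem hTne hTbdd
        have hσIcc : σ ∈ Set.Icc τ t := hσT.1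
        have hζσ : ζ j σ ≤ 0 := hσT.2
        have hσt : σ < t := by
          rcases lt_or_eq_of_le hσIcc.2 with hlt | heq
          · exact hlt
          · exfalso; rw [heq] at hζσ; rw [hζjt] at hζσ; linarith
        have hpos : ∀ u ∈ Set.Ioc σ t, 0 ≤ ζ j u := by
          intro u hu
          by_contra hneg
          have huT : u ∈ T := ⟨⟨le_trans hσIcc.1 hu.1.le, hu.2⟩, le_of_lt (not_le.1 hneg)⟩
          linarith [le_csSup hTbdd huT, hu.1]
        have ht₀σ : t₀ ≤ σ := le_trans hτ₀ hσIcc.1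
        have httf : t ≤ tf := htt₀.2
        -- FTC and comparison
        have hFTC := hζFTC j σ t ht₀σ hσt.le httf
        have hg_int : IntervalIntegrable
            (fun u => α j ⬝ᵥ (f (x u) - f (xc u)) - y' u j) volume σ t :=
          hgint j σ t ht₀σ hσt.le httf
        have hIccsub : Set.Icc σ t ⊆ Set.Icc t₀ tf := Set.Icc_subset_Icc ht₀σ httf
        have hψcont2 : ContinuousOn (fun u => C * ψ u) (Set.Icc t₀ tf) :=
          continuousOn_const.mul hψcont
        have hψ_int : IntervalIntegrable (fun u => C * ψ u) volume σ t := by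
          apply (hψcont2.mono ?_).intervalIntegrable
          rw [Set.uIcc_of_le hσt.le]; exact hIccsub
        have hmono : (∫ u in σ..t, (α j ⬝ᵥ (f (x u) - f (xc u)) - y' u j))
            ≤ ∫ u in σ..t, C * ψ u := by
          apply intervalIntegral.integral_mono_ae_restrict hσt.le hg_int hψ_int
          have h1 : ∀ᵐ u ∂(volume.restrict (Set.Icc σ t)),
              ∀ j' : Fin K, u ∈ Set.Icc τ (τ+h) → 0 ≤ ζ j' u →
                α j' ⬝ᵥ (f (x u) - f (xc u)) - y' u j' ≤ C * ψ u :=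
            ae_restrict_of_ae_restrict_of_subset hIccsub hae
          have h2 : ∀ᵐ u ∂(volume.restrict (Set.Icc σ t)), u ∈ Set.Ioc σ t := by
            rw [← Measure.restrict_congr_set (Ioc_ae_eq_Icc (μ := volume) (a := σ) (b := t))]
            exact ae_restrict_mem measurableSet_Ioc
          filter_upwards [h1, h2] with u hu1 hu2
          have huτ : u ∈ Set.Icc τ (τ+h) :=
            ⟨le_trans hσIcc.1 hu2.1.le, le_trans hu2.2 htI.2⟩
          exact hu1 j huτ (hpos u hu2)
        have hψ_int2 : IntervalIntegrable (fun u => C * ψ u) volume τ σ := by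
          apply (hψcont2.mono ?_).intervalIntegrable
          rw [Set.uIcc_of_le hσIcc.1]
          exact Set.Icc_subset_Icc hτ₀ (le_trans hσt.le httf)
        have he1 : (∫ u in σ..t, C * ψ u) ≤ ∫ u in τ..t, C * ψ u := by
          rw [← intervalIntegral.integral_add_adjacent_intervals hψ_int2 hψ_int]
          have h3 : 0 ≤ ∫ u in τ..σ, C * ψ u :=
            intervalIntegral.integral_nonneg hσIcc.1 fun u _ => mul_nonneg hC0.le (hψ0 u)
          linarith
        have hψ_int3 : IntervalIntegrable (fun u => C * ψ u) volume τ t := by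
          apply (hψcont2.mono ?_).intervalIntegrable
          rw [Set.uIcc_of_le (hσIcc.1.trans hσt.le)]
          exact Set.Icc_subset_Icc hτ₀ httf
        have he2 : (∫ u in τ..t, C * ψ u) ≤ ∫ u in τ..t, C * M := by
          apply intervalIntegral.integral_mono_on (hσIcc.1.trans hσt.le) hψ_int3
            intervalIntegrable_const
          intro u hu
          exact mul_le_mul_of_nonneg_left
            (hMle u ⟨hu.1, le_trans hu.2 htI.2⟩) hC0.le
        have he3 : (∫ u in τ..t, (C * M : ℝ)) = (t - τ) * (C * M) := by
          rw [intervalIntegral.integral_const, smul_eq_mul]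
        have hζle : ζ j t ≤ C * ((t - τ) * M) := by
          have : ζ j t - ζ j σ = ∫ u in σ..t, (α j ⬝ᵥ (f (x u) - f (xc u)) - y' u j) := hFTC
          have hgoal : ζ j t ≤ (t - τ) * (C * M) := by linarith [hmono, he1, he2, he3.le, hζσ]
          linarith [hgoal]
        rw [← hζjt]
        exact hζle
    -- M ≤ M/2 forces M = 0
    have hM2 : M ≤ (1/2) * M := by
      have h1 := hkey2 smax hsmaxI
      have h2 : smax - τ ≤ h := by linarith [hsmaxI.2]
      calc M = ψ smax := rfl
        _ ≤ C * ((smax - τ) * M) := h1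
        _ ≤ C * (h * M) := by
            apply mul_le_mul_of_nonneg_left (mul_le_mul_of_nonneg_right h2 hM0) hC0.le
        _ = (C * h) * M := by ring
        _ ≤ (1/2) * M := mul_le_mul_of_nonneg_right hCh hM0
    have hM00 : M = 0 := by linarith
    have hζI : ∀ u ∈ Set.Icc τ (τ+h), ∀ k, ζ k u ≤ 0 := by
      intro u hu k
      have h1 : ψ u ≤ 0 := hM00 ▸ hMle u hu
      linarith [hζψ u k]
    have hτhS : τ + h ∈ S := by
      refine ⟨⟨by linarith, hhtf⟩, fun u hu k => ?_⟩
      rcases le_total u τ with h1 | h1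
      · exact hτpoly u ⟨hu.1, h1⟩ k
      · exact hζI u ⟨h1, hu.2⟩ k
    have := le_csSup hSbdd hτhS
    linarith
  intro t htmem k
  have := hτpoly t (by rw [hmain]; exact htmem) k
  exact sub_nonpos.1 this
end

section
/- (Interval flow invariance.) Let f : EuclideanSpace ℝ (Fin n) → EuclideanSpace ℝ (Fin n) be locally Lipschitz. Let y̲, ȳ : [0,T] → EuclideanSpace ℝ (Fin n) be differentiable curves with y̲ t ≤ ȳ t componentwise for all t, and suppose for every t ∈ [0,T] and every index i: (y̲' t)_i ≤ f(z)_i for every z with y̲ t ≤ z ≤ ȳ t and z_i = (y̲ t)_i, and (ȳ' t)_i ≥ f(z)_i for every z with y̲ t ≤ z ≤ ȳ t and z_i = (ȳ t)_i. Then every differentiable x : [0,T] → ℝⁿ with derivative f (x t) at every t and y̲ 0 ≤ x 0 ≤ ȳ 0 satisfies y̲ t ≤ x t ≤ ȳ t componentwise for all t ∈ [0,T]. -/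
open Set Metric Filter Topology

/-- A locally Lipschitz map satisfies a global Lipschitz-type distance bound on any
compact set. -/
lemma LocallyLipschitz.exists_dist_le_of_isCompact {E F : Type*} [MetricSpace E] [MetricSpace F]
    {f : E → F} (hf : LocallyLipschitz f) {s : Set E} (hs : IsCompact s) :
    ∃ K : ℝ, 0 ≤ K ∧ ∀ a ∈ s, ∀ b ∈ s, dist (f a) (f b) ≤ K * dist a b := by
  have hfc : Continuous f := hf.continuous
  rcases s.eq_empty_or_nonempty with rfl | hne
  · exact ⟨0, le_refl _, by simp⟩
  choose K t ht hlip using hf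
  choose r hr hball using fun p => Metric.mem_nhds_iff.mp (ht p)
  obtain ⟨F', hF'sub, hcover⟩ := hs.elim_nhds_subcover (fun p => Metric.ball p (r p / 2))
      (fun p _ => Metric.ball_mem_nhds p (by have := hr p; linarith))
  have hF'ne : F'.Nonempty := by
    rcases hne with ⟨a, ha⟩
    rcases Set.mem_iUnion₂.mp (hcover ha) with ⟨p, hp, _⟩
    exact ⟨p, hp⟩
  set ρ : ℝ := F'.inf' hF'ne (fun p => r p / 2) with hρ
  have hρpos : 0 < ρ := by
    rw [hρ, Finset.lt_inf'_iff]
    intro p _; have := hr p; linarith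
  obtain ⟨D, hD⟩ := Metric.isBounded_iff.mp (hs.image hfc).isBounded
  rcases hne with ⟨a₀, ha₀⟩
  have hD0 : 0 ≤ D := le_trans dist_nonneg
    (hD (Set.mem_image_of_mem f ha₀) (Set.mem_image_of_mem f ha₀))
  set Km : ℝ := max (F'.sup' hF'ne (fun p => (K p : ℝ))) (D / ρ) with hKm
  refine ⟨max Km 0, le_max_right _ _, ?_⟩
  intro a ha b hb
  rcases lt_or_ge (dist a b) ρ with hcase | hcase
  · obtain ⟨p, hpF, hap⟩ : ∃ p ∈ F', a ∈ Metric.ball p (r p / 2) := by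
      simpa using Set.mem_iUnion₂.mp (hcover ha)
    have hρle : ρ ≤ r p / 2 := Finset.inf'_le _ hpF
    have hat : a ∈ t p := hball p (by
      simp only [Metric.mem_ball] at hap ⊢; linarith [Metric.mem_ball.mp hap])
    have hbt : b ∈ t p := hball p (by
      have h1 : dist b p ≤ dist b a + dist a p := dist_triangle _ _ _
      have h2 : dist a p < r p / 2 := Metric.mem_ball.mp hap
      have h3 : dist b a < ρ := by rwa [dist_comm]
      exact Metric.mem_ball.mpr (by linarith)
    )
    have hKp : (K p : ℝ) ≤ max Km 0 := le_trans (le_trans (Finset.le_sup' (fun p => ((K p : ℝ))) hpF) (le_max_left _ _)) (le_max_left _ _)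
    calc dist (f a) (f b) ≤ (K p : ℝ) * dist a b := (hlip p).dist_le_mul a hat b hbt
      _ ≤ max Km 0 * dist a b := mul_le_mul_of_nonneg_right hKp dist_nonneg
  · have hfd : dist (f a) (f b) ≤ D := hD (Set.mem_image_of_mem f ha) (Set.mem_image_of_mem f hb)
    have h1 : D = D / ρ * ρ := by field_simp
    have h2 : D / ρ ≤ max Km 0 := le_trans (le_trans (le_max_right _ _) (le_max_left _ _)) (le_refl _)
    calc dist (f a) (f b) ≤ D := hfd
      _ = D / ρ * ρ := h1
      _ ≤ max Km 0 * dist a b :=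
          mul_le_mul h2 hcase (le_of_lt hρpos) (le_max_right _ _)

lemma euclid_abs_apply_le_norm {n : ℕ} (v : EuclideanSpace ℝ (Fin n)) (i : Fin n) :
    |v i| ≤ ‖v‖ := by
  rw [EuclideanSpace.norm_eq]
  have h1 : |v i| = Real.sqrt (‖v i‖ ^ 2) := by
    rw [Real.sqrt_sq_eq_abs, Real.norm_eq_abs, abs_abs]
  rw [h1]
  exact Real.sqrt_le_sqrt (Finset.single_le_sum (fun j _ => sq_nonneg ‖v j‖) (Finset.mem_univ i))

lemma euclid_norm_le {n : ℕ} (v : EuclideanSpace ℝ (Fin n)) {m : ℝ} (hm : 0 ≤ m)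
    (h : ∀ i, |v i| ≤ m) : ‖v‖ ≤ Real.sqrt n * m := by
  rw [EuclideanSpace.norm_eq]
  have h1 : ∑ j, ‖v j‖ ^ 2 ≤ (n : ℝ) * m ^ 2 := by
    calc ∑ j, ‖v j‖ ^ 2 ≤ ∑ _j : Fin n, m ^ 2 := by
          refine Finset.sum_le_sum fun j _ => ?_
          rw [Real.norm_eq_abs]
          exact pow_le_pow_left₀ (abs_nonneg _) (h j) 2
      _ = (n : ℝ) * m ^ 2 := by simp [Finset.sum_const, mul_comm]
  calc Real.sqrt (∑ j, ‖v j‖ ^ 2) ≤ Real.sqrt ((n : ℝ) * m ^ 2) := Real.sqrt_le_sqrt h1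
    _ = Real.sqrt n * m := by
        rw [Real.sqrt_mul (Nat.cast_nonneg n), Real.sqrt_sq hm]

lemma euclid_norm_le_of_abs_le {n : ℕ} (u v : EuclideanSpace ℝ (Fin n))
    (h : ∀ i, |u i| ≤ |v i|) : ‖u‖ ≤ ‖v‖ := by
  rw [EuclideanSpace.norm_eq, EuclideanSpace.norm_eq]
  refine Real.sqrt_le_sqrt (Finset.sum_le_sum fun j _ => ?_)
  rw [Real.norm_eq_abs, Real.norm_eq_abs]
  exact pow_le_pow_left₀ (abs_nonneg _) (h j) 2

/-- If `a` is nonnegative on `[0, t⋆)`, nonpositive at `t⋆ > 0`, and has positive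
derivative at `t⋆`, we get a contradiction. -/
lemma touch_contradiction (a : ℝ → ℝ) (d : ℝ) (ts : ℝ) (hts : 0 < ts)
    (hd : HasDerivAt a d ts) (hdpos : 0 < d)
    (hge : ∀ t ∈ Set.Ico 0 ts, 0 ≤ a t) (h0 : a ts ≤ 0) : False := by
  rw [hasDerivAt_iff_tendsto_slope] at hd
  have hmono : 𝓝[<] ts ≤ 𝓝[≠] ts := nhdsWithin_mono _ fun y hy => ne_of_lt hy
  have h1 : ∀ᶠ t in 𝓝[<] ts, 0 < slope a ts t :=
    (hd.mono_left hmono).eventually (eventually_gt_nhds hdpos)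
  have h2 : Ioo 0 ts ∈ 𝓝[<] ts := Ioo_mem_nhdsLT_of_mem ⟨hts, le_refl _⟩
  obtain ⟨u, hu1, hu2⟩ := (h1.and (eventually_mem_set.mpr h2)).exists
  rw [slope_def_field] at hu1
  have hnum : a u - a ts < 0 := by
    rcases div_pos_iff.mp hu1 with ⟨_, h⟩ | ⟨h, _⟩
    · linarith [hu2.2]
    · exact h
  have := hge u ⟨le_of_lt hu2.1, hu2.2⟩
  linarith

/-- **Interval flow invariance.** If the lower face velocities underapproximate the vector
field and the upper face velocities overapproximate it, trajectories stay in the moving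
interval `[y̲ t, ȳ t]`. -/
theorem interval_flow_invariance {n : ℕ}
    (f : EuclideanSpace ℝ (Fin n) → EuclideanSpace ℝ (Fin n))
    (hf : LocallyLipschitz f)
    (T : ℝ) (hT : 0 ≤ T)
    (yl yu : ℝ → EuclideanSpace ℝ (Fin n))
    (yl' yu' : ℝ → EuclideanSpace ℝ (Fin n))
    (hyl : ∀ t ∈ Set.Icc 0 T, HasDerivAt yl (yl' t) t)
    (hyu : ∀ t ∈ Set.Icc 0 T, HasDerivAt yu (yu' t) t)
    (hle : ∀ t ∈ Set.Icc 0 T, ∀ i, yl t i ≤ yu t i)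
    (hlow : ∀ t ∈ Set.Icc 0 T, ∀ i, ∀ z : EuclideanSpace ℝ (Fin n),
      (∀ j, yl t j ≤ z j ∧ z j ≤ yu t j) → z i = yl t i → yl' t i ≤ f z i)
    (hup : ∀ t ∈ Set.Icc 0 T, ∀ i, ∀ z : EuclideanSpace ℝ (Fin n),
      (∀ j, yl t j ≤ z j ∧ z j ≤ yu t j) → z i = yu t i → f z i ≤ yu' t i)
    (x : ℝ → EuclideanSpace ℝ (Fin n))
    (hx : ∀ t ∈ Set.Icc 0 T, HasDerivAt x (f (x t)) t)
    (hx0 : ∀ i, yl 0 i ≤ x 0 i ∧ x 0 i ≤ yu 0 i) :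
    ∀ t ∈ Set.Icc 0 T, ∀ i, yl t i ≤ x t i ∧ x t i ≤ yu t i := by
  classical
  have h0T : (0 : ℝ) ∈ Icc 0 T := ⟨le_refl 0, hT⟩
  -- continuity on the interval
  have hxc : ContinuousOn x (Icc 0 T) := fun t ht => ((hx t ht).continuousAt).continuousWithinAt
  have hylc : ContinuousOn yl (Icc 0 T) := fun t ht => ((hyl t ht).continuousAt).continuousWithinAt
  have hyuc : ContinuousOn yu (Icc 0 T) := fun t ht => ((hyu t ht).continuousAt).continuousWithinAt
  -- boundedness
  obtain ⟨M1, hM1⟩ := isCompact_Icc.exists_bound_of_continuousOn hxc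
  obtain ⟨M2, hM2⟩ := isCompact_Icc.exists_bound_of_continuousOn hylc
  obtain ⟨M3, hM3⟩ := isCompact_Icc.exists_bound_of_continuousOn hyuc
  set M : ℝ := max M1 (max M2 M3) with hMdef
  have hM : ∀ t ∈ Icc 0 T, ‖x t‖ ≤ M ∧ ‖yl t‖ ≤ M ∧ ‖yu t‖ ≤ M := by
    intro t ht
    refine ⟨le_trans (hM1 t ht) (le_max_left _ _),
      le_trans (hM2 t ht) (le_trans (le_max_left _ _) (le_max_right _ _)),
      le_trans (hM3 t ht) (le_trans (le_max_right _ _) (le_max_right _ _))⟩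
  have hM0 : 0 ≤ M := le_trans (norm_nonneg _) (hM 0 h0T).1
  -- Lipschitz constant on a large ball
  obtain ⟨K, hK0, hKf⟩ := hf.exists_dist_le_of_isCompact
    (isCompact_closedBall (0 : EuclideanSpace ℝ (Fin n)) (3 * M + 1))
  set c : ℝ := K * Real.sqrt n + 1 with hc
  have hsqn : (0 : ℝ) ≤ Real.sqrt n := Real.sqrt_nonneg _
  have hc1 : (1 : ℝ) ≤ c := by
    have : 0 ≤ K * Real.sqrt n := mul_nonneg hK0 hsqn
    linarith
  -- componentwise derivatives
  have hxi : ∀ t ∈ Icc 0 T, ∀ i, HasDerivAt (fun s => x s i) (f (x t) i) t := by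
    intro t ht i
    simpa [Function.comp_def] using (EuclideanSpace.proj i).hasFDerivAt.comp_hasDerivAt t (hx t ht)
  have hyli : ∀ t ∈ Icc 0 T, ∀ i, HasDerivAt (fun s => yl s i) (yl' t i) t := by
    intro t ht i
    simpa [Function.comp_def] using (EuclideanSpace.proj i).hasFDerivAt.comp_hasDerivAt t (hyl t ht)
  have hyui : ∀ t ∈ Icc 0 T, ∀ i, HasDerivAt (fun s => yu s i) (yu' t i) t := by
    intro t ht i
    simpa [Function.comp_def] using (EuclideanSpace.proj i).hasFDerivAt.comp_hasDerivAt t (hyu t ht)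
  -- the key perturbed statement
  have key : ∀ ε : ℝ, 0 < ε → ∀ t ∈ Icc 0 T, ∀ i,
      yl t i - ε * Real.exp (c * t) < x t i ∧ x t i < yu t i + ε * Real.exp (c * t) := by
    intro ε hε
    by_contra hcon
    push_neg at hcon
    set δ : ℝ → ℝ := fun s => ε * Real.exp (c * s) with hδdef
    have hδpos : ∀ s, 0 < δ s := fun s => mul_pos hε (Real.exp_pos _)
    have hδd : ∀ t : ℝ, HasDerivAt δ (c * δ t) t := by
      intro t
      have h1 : HasDerivAt (fun s : ℝ => c * s) c t := by
        simpa using (hasDerivAt_id t).const_mul c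
      have h2 := (h1.exp).const_mul ε
      rw [hδdef]
      refine h2.congr_deriv ?_
      beta_reduce
      ring
    set A : Set ℝ := {t | t ∈ Icc 0 T ∧ ∃ i, x t i ≤ yl t i - δ t ∨ yu t i + δ t ≤ x t i}
      with hAdef
    have hAne : A.Nonempty := by
      obtain ⟨t, ht, i, hi⟩ := hcon
      refine ⟨t, ht, i, ?_⟩
      by_cases h : yl t i - δ t < x t i
      · exact Or.inr (hi h)
      · exact Or.inl (not_lt.mp h)
    have hA_Icc : A ⊆ Icc 0 T := fun t ht => ht.1
    have hbdd : BddBelow A := ⟨0, fun t ht => (hA_Icc ht).1⟩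
    have hcontl : ∀ i : Fin n, ContinuousOn (fun t => x t i - (yl t i - δ t)) (Icc 0 T) :=
      fun i t ht =>
        (((hxi t ht i).sub ((hyli t ht i).sub (hδd t))).continuousAt).continuousWithinAt
    have hcontu : ∀ i : Fin n, ContinuousOn (fun t => yu t i + δ t - x t i) (Icc 0 T) :=
      fun i t ht =>
        ((((hyui t ht i).add (hδd t)).sub (hxi t ht i)).continuousAt).continuousWithinAt
    have hAclosed : IsClosed A := by
      have hrw : A = ⋃ i : Fin n,
          ((Icc 0 T ∩ (fun t => x t i - (yl t i - δ t)) ⁻¹' Iic 0) ∪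
           (Icc 0 T ∩ (fun t => yu t i + δ t - x t i) ⁻¹' Iic 0)) := by
        ext t
        simp only [hAdef, Set.mem_setOf_eq, Set.mem_iUnion, Set.mem_union, Set.mem_inter_iff,
          Set.mem_preimage, Set.mem_Iic]
        constructor
        · rintro ⟨htIcc, i, hi | hi⟩
          · exact ⟨i, Or.inl ⟨htIcc, by linarith⟩⟩
          · exact ⟨i, Or.inr ⟨htIcc, by linarith⟩⟩
        · rintro ⟨i, ⟨htIcc, hi⟩ | ⟨htIcc, hi⟩⟩
          · exact ⟨htIcc, i, Or.inl (by linarith)⟩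
          · exact ⟨htIcc, i, Or.inr (by linarith)⟩
      rw [hrw]
      refine isClosed_iUnion_of_finite fun i => IsClosed.union ?_ ?_
      · exact (hcontl i).preimage_isClosed_of_isClosed isClosed_Icc isClosed_Iic
      · exact (hcontu i).preimage_isClosed_of_isClosed isClosed_Icc isClosed_Iic
    set ts : ℝ := sInf A with htsdef
    have htsA : ts ∈ A := hAclosed.csInf_mem hAne hbdd
    have htsIcc : ts ∈ Icc 0 T := hA_Icc htsA
    have hts0 : 0 < ts := by
      rcases lt_or_eq_of_le htsIcc.1 with h | h
      · exact h
      · exfalso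
        rcases htsA.2 with ⟨i, hi | hi⟩
        · rw [← h] at hi
          have := (hx0 i).1
          have := hδpos 0
          linarith
        · rw [← h] at hi
          have := (hx0 i).2
          have := hδpos 0
          linarith
    have hIco : ∀ t ∈ Ico 0 ts, ∀ j, yl t j - δ t < x t j ∧ x t j < yu t j + δ t := by
      intro t ht j
      have htT : t ∈ Icc 0 T := ⟨ht.1, le_trans (le_of_lt ht.2) htsIcc.2⟩
      have hnA : t ∉ A := notMem_of_lt_csInf ht.2 hbdd
      constructor
      · by_contra h
        exact hnA ⟨htT, j, Or.inl (by linarith [not_lt.mp h])⟩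
      · by_contra h
        exact hnA ⟨htT, j, Or.inr (by linarith [not_lt.mp h])⟩
    -- closure: nonstrict bounds at ts for every coordinate
    have hatts : ∀ j, yl ts j - δ ts ≤ x ts j ∧ x ts j ≤ yu ts j + δ ts := by
      intro j
      have hIoo : Ioo 0 ts ∈ 𝓝[<] ts := Ioo_mem_nhdsLT_of_mem ⟨hts0, le_refl _⟩
      constructor
      · have hcA : ContinuousAt (fun t => x t j - (yl t j - δ t)) ts :=
          ((hxi ts htsIcc j).sub ((hyli ts htsIcc j).sub (hδd ts))).continuousAt
        have htd : Filter.Tendsto (fun t => x t j - (yl t j - δ t)) (𝓝[<] ts)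
            (𝓝 (x ts j - (yl ts j - δ ts))) := hcA.tendsto.mono_left nhdsWithin_le_nhds
        have hev : ∀ᶠ t in 𝓝[<] ts, 0 ≤ x t j - (yl t j - δ t) := by
          filter_upwards [hIoo] with t ht
          have := (hIco t ⟨le_of_lt ht.1, ht.2⟩ j).1
          linarith
        have := ge_of_tendsto htd hev
        linarith
      · have hcA : ContinuousAt (fun t => yu t j + δ t - x t j) ts :=
          (((hyui ts htsIcc j).add (hδd ts)).sub (hxi ts htsIcc j)).continuousAt
        have htd : Filter.Tendsto (fun t => yu t j + δ t - x t j) (𝓝[<] ts)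
            (𝓝 (yu ts j + δ ts - x ts j)) := hcA.tendsto.mono_left nhdsWithin_le_nhds
        have hev : ∀ᶠ t in 𝓝[<] ts, 0 ≤ yu t j + δ t - x t j := by
          filter_upwards [hIoo] with t ht
          have := (hIco t ⟨le_of_lt ht.1, ht.2⟩ j).2
          linarith
        have := ge_of_tendsto htd hev
        linarith
    -- the clamped point
    set z : EuclideanSpace ℝ (Fin n) := WithLp.toLp 2 (fun j => max (yl ts j) (min (x ts j) (yu ts j))) with hzdef
    have hzj : ∀ j, z j = max (yl ts j) (min (x ts j) (yu ts j)) := fun j => rfl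
    have hz_mem : ∀ j, yl ts j ≤ z j ∧ z j ≤ yu ts j := by
      intro j
      rw [hzj]
      exact ⟨le_max_left _ _, max_le (hle ts htsIcc j) (min_le_right _ _)⟩
    have hz_close : ∀ j, |x ts j - z j| ≤ δ ts := by
      intro j
      rw [hzj]
      rcases le_total (x ts j) (yl ts j) with h1 | h1
      · have hmin : min (x ts j) (yu ts j) = x ts j :=
          min_eq_left (le_trans h1 (hle ts htsIcc j))
        rw [hmin, max_eq_left h1, abs_of_nonpos (by linarith)]
        linarith [(hatts j).1]
      · rcases le_total (x ts j) (yu ts j) with h2 | h2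
        · rw [min_eq_left h2, max_eq_right h1, sub_self, abs_zero]
          exact le_of_lt (hδpos ts)
        · rw [min_eq_right h2, max_eq_right (hle ts htsIcc j), abs_of_nonneg (by linarith)]
          linarith [(hatts j).2]
    -- norms
    have hxnorm : ‖x ts‖ ≤ M := (hM ts htsIcc).1
    have hznorm : ‖z‖ ≤ 3 * M := by
      have h1 : z = yl ts + (z - yl ts) := by abel
      have h2 : ‖z - yl ts‖ ≤ ‖yu ts - yl ts‖ := by
        refine euclid_norm_le_of_abs_le _ _ fun j => ?_
        have h3 := (hz_mem j).1
        have h4 := (hz_mem j).2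
        have h5 := hle ts htsIcc j
        rw [PiLp.sub_apply, PiLp.sub_apply, abs_of_nonneg (by linarith),
          abs_of_nonneg (by linarith)]
        linarith
      have h6 : ‖yu ts - yl ts‖ ≤ ‖yu ts‖ + ‖yl ts‖ := norm_sub_le _ _
      calc ‖z‖ = ‖yl ts + (z - yl ts)‖ := by rw [← h1]
        _ ≤ ‖yl ts‖ + ‖z - yl ts‖ := norm_add_le _ _
        _ ≤ ‖yl ts‖ + (‖yu ts‖ + ‖yl ts‖) := by linarith
        _ ≤ 3 * M := by linarith [(hM ts htsIcc).2.1, (hM ts htsIcc).2.2]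
    -- Lipschitz estimate between x ts and z
    have hdistfz : ∀ i, |f (x ts) i - f z i| ≤ K * (Real.sqrt n * δ ts) := by
      intro i
      have hmem1 : x ts ∈ closedBall (0 : EuclideanSpace ℝ (Fin n)) (3 * M + 1) := by
        rw [mem_closedBall_zero_iff]; linarith
      have hmem2 : z ∈ closedBall (0 : EuclideanSpace ℝ (Fin n)) (3 * M + 1) := by
        rw [mem_closedBall_zero_iff]; linarith
      have h1 : dist (f (x ts)) (f z) ≤ K * dist (x ts) z := hKf _ hmem1 _ hmem2
      have h2 : ‖x ts - z‖ ≤ Real.sqrt n * δ ts := by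
        refine euclid_norm_le _ (le_of_lt (hδpos ts)) fun j => ?_
        rw [PiLp.sub_apply]
        exact hz_close j
      have h3 : |f (x ts) i - f z i| ≤ ‖f (x ts) - f z‖ := by
        have := euclid_abs_apply_le_norm (f (x ts) - f z) i
        rwa [PiLp.sub_apply] at this
      rw [← dist_eq_norm] at h3
      have h4 : dist (x ts) z = ‖x ts - z‖ := dist_eq_norm _ _
      calc |f (x ts) i - f z i| ≤ K * dist (x ts) z := le_trans h3 h1
        _ ≤ K * (Real.sqrt n * δ ts) := by
            rw [h4]; exact mul_le_mul_of_nonneg_left h2 hK0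
    obtain ⟨i, hi⟩ := htsA.2
    have hKδ : K * Real.sqrt n * δ ts + δ ts = c * δ ts := by rw [hc]; ring
    rcases hi with hi | hi
    · -- touching the lower face
      have hzi : z i = yl ts i := by
        have hlt : x ts i < yl ts i := lt_of_le_of_lt hi (by linarith [hδpos ts])
        rw [hzj, min_eq_left (le_trans (le_of_lt hlt) (hle ts htsIcc i)),
          max_eq_left (le_of_lt hlt)]
      have hflow : yl' ts i ≤ f z i := hlow ts htsIcc i z hz_mem hzi
      have hd : HasDerivAt (fun t => x t i - (yl t i - δ t))
          (f (x ts) i - (yl' ts i - c * δ ts)) ts :=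
        (hxi ts htsIcc i).sub ((hyli ts htsIcc i).sub (hδd ts))
      refine touch_contradiction _ _ ts hts0 hd ?_ ?_ ?_
      · have h5 := hdistfz i
        have h6 : f z i - K * (Real.sqrt n * δ ts) ≤ f (x ts) i := by
          have := abs_le.mp h5
          linarith [this.2]
        have h7 := hδpos ts
        nlinarith [mul_nonneg (mul_nonneg hK0 hsqn) (le_of_lt h7)]
      · intro t ht
        have := (hIco t ht i).1
        linarith
      · linarith [hi]
    · -- touching the upper face
      have hzi : z i = yu ts i := by
        have hlt : yu ts i < x ts i := lt_of_lt_of_le (by linarith [hδpos ts]) hi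
        rw [hzj, min_eq_right (le_of_lt hlt), max_eq_right (hle ts htsIcc i)]
      have hflow : f z i ≤ yu' ts i := hup ts htsIcc i z hz_mem hzi
      have hd : HasDerivAt (fun t => yu t i + δ t - x t i)
          (yu' ts i + c * δ ts - f (x ts) i) ts :=
        ((hyui ts htsIcc i).add (hδd ts)).sub (hxi ts htsIcc i)
      refine touch_contradiction _ _ ts hts0 hd ?_ ?_ ?_
      · have h5 := hdistfz i
        have h6 : f (x ts) i ≤ f z i + K * (Real.sqrt n * δ ts) := by
          have := abs_le.mp h5
          linarith [this.1]
        have h7 := hδpos ts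
        nlinarith [mul_nonneg (mul_nonneg hK0 hsqn) (le_of_lt h7)]
      · intro t ht
        have := (hIco t ht i).2
        linarith
      · linarith [hi]
  -- conclude by letting ε → 0
  intro t ht i
  have hexp : 0 < Real.exp (c * t) := Real.exp_pos _
  constructor
  · by_contra h
    push_neg at h
    set ε : ℝ := (yl t i - x t i) / (2 * Real.exp (c * t)) with hεdef
    have hεpos : 0 < ε := div_pos (by linarith) (by linarith)
    have hk := (key ε hεpos t ht i).1
    have heq : ε * Real.exp (c * t) = (yl t i - x t i) / 2 := by
      rw [hεdef]; field_simp
    rw [heq] at hk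
    linarith
  · by_contra h
    push_neg at h
    set ε : ℝ := (x t i - yu t i) / (2 * Real.exp (c * t)) with hεdef
    have hεpos : 0 < ε := div_pos (by linarith) (by linarith)
    have hk := (key ε hεpos t ht i).2
    have heq : ε * Real.exp (c * t) = (x t i - yu t i) / 2 := by
      rw [hεdef]; field_simp
    rw [heq] at hk
    linarith
end

section
/- (Exponential contraction bound.) Let f : EuclideanSpace ℝ (Fin n) → EuclideanSpace ℝ (Fin n) and c ∈ ℝ satisfy the one-sided Lipschitz condition ⟪f u - f v, u - v⟫ ≤ c · ‖u - v‖² for all u, v. Let x, x̊ : [t₀, t_f] → EuclideanSpace ℝ (Fin n) be differentiable with derivatives f (x t) and f (x̊ t) at every t. Then for all t ∈ [t₀, t_f], ‖x t - x̊ t‖ ≤ exp (c (t - t₀)) · ‖x t₀ - x̊ t₀‖. -/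
/-- **Exponential contraction bound.** A one-sided Lipschitz (logarithmic norm) bound `c`
yields the Grönwall estimate `‖x t - x̊ t‖ ≤ exp (c (t - t₀)) ‖x t₀ - x̊ t₀‖`. -/
theorem exponential_contraction_bound {n : ℕ}
    (f : EuclideanSpace ℝ (Fin n) → EuclideanSpace ℝ (Fin n)) (c : ℝ)
    (hosl : ∀ u v : EuclideanSpace ℝ (Fin n),
      (inner ℝ (f u - f v) (u - v) : ℝ) ≤ c * ‖u - v‖ ^ 2)
    (t₀ tf : ℝ)
    (x xc : ℝ → EuclideanSpace ℝ (Fin n))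
    (hx : ∀ t ∈ Set.Icc t₀ tf, HasDerivAt x (f (x t)) t)
    (hxc : ∀ t ∈ Set.Icc t₀ tf, HasDerivAt xc (f (xc t)) t) :
    ∀ t ∈ Set.Icc t₀ tf, ‖x t - xc t‖ ≤ Real.exp (c * (t - t₀)) * ‖x t₀ - xc t₀‖ := by
  set v : ℝ → EuclideanSpace ℝ (Fin n) := fun t => x t - xc t with hv
  set g : ℝ → ℝ := fun t => ‖v t‖ ^ 2 with hg
  have hvd : ∀ t ∈ Set.Icc t₀ tf, HasDerivAt v (f (x t) - f (xc t)) t := fun t ht =>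
    (hx t ht).sub (hxc t ht)
  have hgd : ∀ t ∈ Set.Icc t₀ tf,
      HasDerivAt g (2 * (inner ℝ (f (x t) - f (xc t)) (v t) : ℝ)) t := by
    intro t ht
    have h := (hvd t ht).inner ℝ (hvd t ht)
    have heq : g = fun s => (inner ℝ (v s) (v s) : ℝ) := by
      funext s; rw [real_inner_self_eq_norm_sq]
    rw [heq]
    refine h.congr_deriv ?_
    rw [real_inner_comm]; ring
  have key : ∀ t ∈ Set.Icc t₀ tf, g t ≤ gronwallBound (g t₀) (2 * c) 0 (t - t₀) := by
    apply le_gronwallBound_of_liminf_deriv_right_le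
      (f' := fun t => 2 * (inner ℝ (f (x t) - f (xc t)) (v t) : ℝ))
    · exact fun t ht => ((hgd t ht).continuousAt).continuousWithinAt
    · intro t ht r hr
      exact ((hgd t (Set.mem_Icc_of_Ico ht)).hasDerivWithinAt).liminf_right_slope_le hr
    · exact le_refl _
    · intro t ht
      have h1 := hosl (x t) (xc t)
      simp only [hg, hv] at *
      nlinarith
  intro t ht
  have h1 : g t ≤ g t₀ * Real.exp (2 * c * (t - t₀)) := by
    have := key t ht
    rwa [gronwallBound_ε0] at this
  have h2 : ‖v t‖ ^ 2 ≤ (Real.exp (c * (t - t₀)) * ‖v t₀‖) ^ 2 := by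
    have hxp : (Real.exp (c * (t - t₀))) ^ 2 = Real.exp (2 * c * (t - t₀)) := by
      rw [← Real.exp_nat_mul]; ring_nf
    calc ‖v t‖ ^ 2 ≤ ‖v t₀‖ ^ 2 * Real.exp (2 * c * (t - t₀)) := h1
    _ = (Real.exp (c * (t - t₀)) * ‖v t₀‖) ^ 2 := by rw [mul_pow, hxp]; ring
  calc ‖v t‖ = Real.sqrt (‖v t‖ ^ 2) := (Real.sqrt_sq (norm_nonneg _)).symm
  _ ≤ Real.sqrt ((Real.exp (c * (t - t₀)) * ‖v t₀‖) ^ 2) := Real.sqrt_le_sqrt h2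
  _ = Real.exp (c * (t - t₀)) * ‖v t₀‖ := Real.sqrt_sq (by positivity)
end

section
/- Let x̊ ∈ EuclideanSpace ℝ (Fin n), let α be an invertible real n×n matrix, let J be a real n×n matrix, and let M₁, …, M_N be real n×n matrices. Suppose c ∈ ℝ satisfies: for every i, the matrix c • 1 - (α*(M_i - J)*α⁻¹ + (α*(M_i - J)*α⁻¹)ᵀ) is positive semidefinite. Then for every M in the convex hull of {M₁,…,M_N} and every x ∈ ℝⁿ, 2 * ⟪(αᵀ*α).mulVec (x - x̊), (M - J).mulVec (x - x̊)⟫ ≤ c * ⟪(αᵀ*α).mulVec (x - x̊), x - x̊⟫. -/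
open Matrix

/-- The corner LMI condition yields `ξ ≤ c·y` on the ellipsoid boundary: if
`c • 1 - (α(Mᵢ - J)α⁻¹ + (α(Mᵢ - J)α⁻¹)ᵀ) ⪰ 0` for each corner `Mᵢ`, then for every `M`
in the convex hull and every `x`,
`2⟪αᵀα(x - x̊), (M - J)(x - x̊)⟫ ≤ c⟪αᵀα(x - x̊), x - x̊⟫`. -/
theorem corner_lmi_facet_bound {n N : ℕ}
    (xc : EuclideanSpace ℝ (Fin n))
    (α J : Matrix (Fin n) (Fin n) ℝ) (hα : IsUnit α)
    (Ms : Fin N → Matrix (Fin n) (Fin n) ℝ) (c : ℝ)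
    (hLMI : ∀ i, (c • (1 : Matrix (Fin n) (Fin n) ℝ) -
        (α * (Ms i - J) * α⁻¹ + (α * (Ms i - J) * α⁻¹)ᵀ)).PosSemidef) :
    ∀ M ∈ convexHull ℝ (Set.range Ms), ∀ x : EuclideanSpace ℝ (Fin n),
      2 * ((αᵀ * α).mulVec (x - xc) ⬝ᵥ (M - J).mulVec (x - xc)) ≤
        c * ((αᵀ * α).mulVec (x - xc) ⬝ᵥ (x - xc)) := by
  have hdet : IsUnit α.det := (Matrix.isUnit_iff_isUnit_det α).mp hα
  have hinv : α⁻¹ * α = 1 := Matrix.nonsing_inv_mul α hdet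
  set S : Set (Matrix (Fin n) (Fin n) ℝ) :=
    {M | ∀ x : EuclideanSpace ℝ (Fin n),
      2 * ((αᵀ * α).mulVec (x - xc) ⬝ᵥ (M - J).mulVec (x - xc)) ≤
        c * ((αᵀ * α).mulVec (x - xc) ⬝ᵥ (x - xc))} with hS
  have hconv : Convex ℝ S := by
    intro M₁ h₁ M₂ h₂ a b ha hb hab
    intro x
    have hsum : a • M₁ + b • M₂ - J = a • (M₁ - J) + b • (M₂ - J) := by
      have h : a • (M₁ - J) + b • (M₂ - J) = a • M₁ + b • M₂ - (a + b) • J := by module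
      rw [h, hab, one_smul]
    rw [hsum]
    have h1 := h₁ x
    have h2 := h₂ x
    simp only [Matrix.add_mulVec, Matrix.smul_mulVec, dotProduct_add,
      dotProduct_smul, smul_eq_mul]
    have h1' := mul_le_mul_of_nonneg_left h1 ha
    have h2' := mul_le_mul_of_nonneg_left h2 hb
    have h3 : a * (c * ((αᵀ * α).mulVec (x - xc) ⬝ᵥ (x - xc)))
        + b * (c * ((αᵀ * α).mulVec (x - xc) ⬝ᵥ (x - xc)))
        = c * ((αᵀ * α).mulVec (x - xc) ⬝ᵥ (x - xc)) := by
      rw [← add_mul, hab, one_mul]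
    nlinarith [h1', h2', h3]
  have hsub : Set.range Ms ⊆ S := by
    rintro _ ⟨i, rfl⟩ x
    set v : Fin n → ℝ := fun j => (x - xc) j with hv
    set w : Fin n → ℝ := α.mulVec v with hw
    set A : Matrix (Fin n) (Fin n) ℝ := α * (Ms i - J) * α⁻¹ with hA
    have pair : ∀ u : Fin n → ℝ, (α.mulVec v) ⬝ᵥ (α.mulVec u) = (αᵀ * α).mulVec v ⬝ᵥ u := by
      intro u
      rw [Matrix.dotProduct_mulVec, ← Matrix.mulVec_transpose, Matrix.mulVec_mulVec]
    have hAw : A.mulVec w = α.mulVec ((Ms i - J).mulVec v) := by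
      rw [hw, Matrix.mulVec_mulVec, hA, mul_assoc (α * (Ms i - J)) α⁻¹ α, hinv, mul_one,
        ← Matrix.mulVec_mulVec]
    have hpsd := (hLMI i).dotProduct_mulVec_nonneg w
    have hstar : star w = w := rfl
    rw [hstar] at hpsd
    have hexp : w ⬝ᵥ (c • (1 : Matrix (Fin n) (Fin n) ℝ) - (A + Aᵀ)).mulVec w
        = c * (w ⬝ᵥ w) - (w ⬝ᵥ A.mulVec w + w ⬝ᵥ Aᵀ.mulVec w) := by
      rw [Matrix.sub_mulVec, Matrix.add_mulVec, dotProduct_sub, dotProduct_add,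
        Matrix.smul_mulVec, Matrix.one_mulVec, dotProduct_smul, smul_eq_mul]
    rw [hexp] at hpsd
    have hAt : w ⬝ᵥ Aᵀ.mulVec w = w ⬝ᵥ A.mulVec w := by
      rw [Matrix.dotProduct_mulVec, Matrix.vecMul_transpose, dotProduct_comm]
    rw [hAt] at hpsd
    have key1 : w ⬝ᵥ A.mulVec w = (αᵀ * α).mulVec v ⬝ᵥ (Ms i - J).mulVec v := by
      rw [hAw, hw, pair]
    have key2 : w ⬝ᵥ w = (αᵀ * α).mulVec v ⬝ᵥ v := by
      rw [hw, pair]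
    have : 2 * ((αᵀ * α).mulVec v ⬝ᵥ (Ms i - J).mulVec v) ≤ c * ((αᵀ * α).mulVec v ⬝ᵥ v) := by
      rw [← key1, ← key2]; linarith
    exact this
  intro M hM
  exact convexHull_min hsub hconv hM
end
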